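/- arXiv:1608.03524 — 5 statements merged into one kernel-verified Lean document; each statement's English description precedes it below -/
import Mathlib

section
/- Let φ : ℝ → ℝ be continuous and compactly supported, with Fourier transform φ̂. If the 2π-periodization Π_φ(x) = ∑_{α ∈ ℤ} |φ̂(x + 2πα)|² is strictly positive for all x, and φ satisfies the refinement relation φ̂(x) = (1/g)·p(e^{-ix/g})·φ̂(x/g) for a trigonometric polynomial p and integer g ≥ 2, then ∑_{j=0}^{g-1} |p(e^{-i(x+2πj)/g})|² > 0 for all x ∈ ℝ. -/
open Real Finset

theorem stmt11 (g : ℕ) (hg : 2 ≤ g) (φ : ℝ → ℝ) (hcont : Continuous φ)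
    (hsupp : HasCompactSupport φ)
    (φhat : ℝ → ℂ)
    (hhat : ∀ x : ℝ, φhat x = ∫ t : ℝ, (φ t : ℂ) * Complex.exp (-Complex.I * t * x))
    (P : ℝ → ℂ) (s : Finset ℤ) (c : ℤ → ℂ)
    (hP : ∀ x : ℝ, P x = ∑ α ∈ s, c α * Complex.exp (-Complex.I * (α : ℂ) * x))
    (hPi : ∀ x : ℝ, 0 < ∑' α : ℤ, ‖φhat (x + 2 * π * α)‖ ^ 2)
    (href : ∀ x : ℝ, φhat x = (1 / g) * P (x / g) * φhat (x / g)) :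
    ∀ x : ℝ, 0 < ∑ j ∈ Finset.range g, ‖P ((x + 2 * π * j) / g)‖ ^ 2 := by
  intro x
  have hg0 : (0 : ℤ) < (g : ℤ) := by exact_mod_cast Nat.lt_of_lt_of_le Nat.zero_lt_two hg
  have hgR : (g : ℝ) ≠ 0 := by positivity
  -- P is 2π-periodic
  have hper : ∀ (y : ℝ) (m : ℤ), P (y + 2 * π * m) = P y := by
    intro y m
    rw [hP, hP]
    refine Finset.sum_congr rfl fun α _ => ?_
    congr 1
    have h1 : -Complex.I * (α : ℂ) * ((y + 2 * π * m : ℝ) : ℂ)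
        = -Complex.I * (α : ℂ) * (y : ℝ) + ((-(α * m) : ℤ) : ℂ) * (2 * (π : ℂ) * Complex.I) := by
      push_cast; ring
    rw [h1, Complex.exp_add, Complex.exp_int_mul_two_pi_mul_I, mul_one]
  -- find α with φhat (x + 2πα) ≠ 0
  obtain ⟨α, hα⟩ : ∃ α : ℤ, φhat (x + 2 * π * α) ≠ 0 := by
    by_contra h
    push_neg at h
    have := hPi x
    simp only [h, map_zero] at this
    simp at this
  -- refinement ⇒ P ((x+2πα)/g) ≠ 0
  have hPne : P ((x + 2 * π * α) / g) ≠ 0 := by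
    intro h0
    exact hα (by rw [href (x + 2 * π * α), h0, mul_zero, zero_mul])
  -- write α = g*q + r
  set q : ℤ := α / (g : ℤ) with hq
  set r : ℤ := α % (g : ℤ) with hr
  have hrq : (g : ℤ) * q + r = α := Int.mul_ediv_add_emod α g
  have hr0 : 0 ≤ r := Int.emod_nonneg α (by omega)
  have hrg : r < g := Int.emod_lt_of_pos α hg0
  have hj : r.toNat < g := by omega
  have hcastr : ((r.toNat : ℕ) : ℝ) = (r : ℝ) := by
    exact_mod_cast Int.toNat_of_nonneg hr0
  have hkey : P ((x + 2 * π * (r.toNat : ℕ)) / g) ≠ 0 := by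
    have heq : (x + 2 * π * α) / g = (x + 2 * π * (r.toNat : ℕ)) / g + 2 * π * q := by
      rw [hcastr]
      have : (α : ℝ) = (g : ℝ) * q + r := by exact_mod_cast hrq.symm
      field_simp
      rw [this]; ring
    intro h0
    apply hPne
    rw [heq, hper, h0]
  refine Finset.sum_pos' (fun i _ => by positivity) ⟨r.toNat, Finset.mem_range.mpr hj, ?_⟩
  exact pow_pos (norm_pos_iff.mpr hkey) 2
end

section
/- Under the refinement relation φ̂(x) = (1/g)·p(e^{-ix/g})·φ̂(x/g), the periodization satisfies the identity Π_φ(x) = (1/g²) · ∑_{j=0}^{g-1} |p(e^{-i(x+2πj)/g})|² · Π_φ((x+2πj)/g) for all x ∈ ℝ. -/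
set_option maxHeartbeats 1000000


open Real Finset

theorem stmt12 (g : ℕ) (hg : 2 ≤ g) (φ : ℝ → ℝ) (hcont : Continuous φ)
    (hsupp : HasCompactSupport φ)
    (φhat : ℝ → ℂ)
    (hhat : ∀ x : ℝ, φhat x = ∫ t : ℝ, (φ t : ℂ) * Complex.exp (-Complex.I * t * x))
    (P : ℝ → ℂ) (s : Finset ℤ) (c : ℤ → ℂ)
    (hP : ∀ x : ℝ, P x = ∑ α ∈ s, c α * Complex.exp (-Complex.I * (α : ℂ) * x))
    (hsum : ∀ x : ℝ, Summable fun α : ℤ => ‖φhat (x + 2 * π * α)‖ ^ 2)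
    (href : ∀ x : ℝ, φhat x = (1 / g) * P (x / g) * φhat (x / g)) :
    ∀ x : ℝ, (∑' α : ℤ, ‖φhat (x + 2 * π * α)‖ ^ 2) =
      (1 / (g : ℝ) ^ 2) * ∑ j ∈ Finset.range g,
        ‖P ((x + 2 * π * j) / g)‖ ^ 2 *
          ∑' α : ℤ, ‖φhat ((x + 2 * π * j) / g + 2 * π * α)‖ ^ 2 := by
  have hg0 : (g : ℝ) ≠ 0 := by positivity
  haveI : NeZero g := ⟨by omega⟩
  -- periodicity of P
  have hPper : ∀ (y : ℝ) (β : ℤ), P (y + 2 * π * β) = P y := by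
    intro y β
    rw [hP, hP]
    refine Finset.sum_congr rfl fun α _ => ?_
    congr 1
    rw [show -Complex.I * (α:ℂ) * ((y + 2*π*β : ℝ) : ℂ)
        = -Complex.I * (α:ℂ) * (y:ℝ) + ((-(α*β) : ℤ) : ℂ) * (2 * π * Complex.I) by
      push_cast; ring]
    rw [Complex.exp_add, Complex.exp_int_mul_two_pi_mul_I, mul_one]
  -- the key pointwise identity
  have key : ∀ y : ℝ, ‖φhat y‖ ^ 2
      = (1 / (g:ℝ)^2) * (‖P (y / g)‖ ^ 2 * ‖φhat (y / g)‖ ^ 2) := by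
    intro y
    rw [href y, norm_mul, norm_mul]
    have : ‖(1 : ℂ) / g‖ = 1 / (g : ℝ) := by
      rw [norm_div, norm_one, Complex.norm_natCast]
    rw [this]
    field_simp
  intro x
  -- reindex the sum
  have he := ((Int.divModEquiv g).symm.tsum_eq
    (fun α : ℤ => ‖φhat (x + 2 * π * α)‖ ^ 2)).symm
  rw [he]
  have hsummable : Summable fun p : ℤ × Fin g =>
      ‖φhat (x + 2 * π * ((Int.divModEquiv g).symm p : ℤ))‖ ^ 2 :=
    (Int.divModEquiv g).symm.summable_iff.mpr (hsum x)
  rw [Summable.tsum_prod hsummable]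
  have harg : ∀ (q : ℤ) (r : Fin g),
      (x + 2 * π * (((Int.divModEquiv g).symm (q, r) : ℤ) : ℝ)) / g
        = (x + 2 * π * (r : ℕ)) / g + 2 * π * q := by
    intro q r
    simp only [Int.divModEquiv_symm_apply]
    push_cast
    field_simp
    ring
  calc ∑' (q : ℤ), ∑' (r : Fin g),
        ‖φhat (x + 2 * π * ((Int.divModEquiv g).symm (q, r) : ℤ))‖ ^ 2
      = ∑' (q : ℤ), ∑ r : Fin g, (1 / (g:ℝ)^2) * (‖P ((x + 2*π*(r:ℕ))/g)‖ ^ 2 *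
          ‖φhat ((x + 2*π*(r:ℕ))/g + 2*π*q)‖ ^ 2) := by
        refine tsum_congr fun q => ?_
        rw [tsum_fintype]
        refine Finset.sum_congr rfl fun r _ => ?_
        rw [key (x + 2 * π * (((Int.divModEquiv g).symm (q, r) : ℤ) : ℝ)), harg q r,
          hPper ((x + 2*π*(r:ℕ))/g) q]
    _ = ∑ r : Fin g, ∑' (q : ℤ), (1 / (g:ℝ)^2) * (‖P ((x + 2*π*(r:ℕ))/g)‖ ^ 2 *
          ‖φhat ((x + 2*π*(r:ℕ))/g + 2*π*q)‖ ^ 2) := by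
        refine Summable.tsum_finsetSum fun r _ => ?_
        exact ((hsum ((x + 2*π*(r:ℕ))/g)).mul_left _).mul_left _
    _ = (1 / (g : ℝ) ^ 2) * ∑ j ∈ Finset.range g,
        ‖P ((x + 2 * π * j) / g)‖ ^ 2 *
          ∑' α : ℤ, ‖φhat ((x + 2 * π * j) / g + 2 * π * α)‖ ^ 2 := by
        rw [Finset.mul_sum, ← Fin.sum_univ_eq_sum_range
          (fun j => (1 / (g:ℝ)^2) * (‖P ((x + 2*π*(j:ℕ))/g)‖ ^ 2 *
            ∑' α : ℤ, ‖φhat ((x + 2*π*(j:ℕ))/g + 2*π*α)‖ ^ 2))]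
        refine Finset.sum_congr rfl fun r _ => ?_
        rw [tsum_mul_left, tsum_mul_left]
end

section
/- Let g ≥ 2, n = gN, f and p trigonometric polynomials, A_n = C_n(f) the circulant matrix with symbol f, and P_n = C_n(p)·K_{n,g}^T. Then P_n^H A_n P_n = C_N(f₁), where f₁(x) = (1/g) · ∑_{j=0}^{g-1} f(x/g + 2πj/g)·|p(x/g + 2πj/g)|². -/
open Real Finset Matrix

/-- The `m × m` Fourier matrix. -/
noncomputable def fourierM (m : ℕ) : Matrix (Fin m) (Fin m) ℂ := fun r s =>
  (1 / Real.sqrt m) * Complex.exp (-2 * Real.pi * Complex.I * ((r : ℕ) : ℂ) * ((s : ℕ) : ℂ) / m)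

/-- The `m × m` circulant matrix with symbol `h`, i.e. the matrix diagonalized by the Fourier
matrix with eigenvalues `h (2πr/m)`. -/
noncomputable def circ (m : ℕ) (h : ℝ → ℂ) : Matrix (Fin m) (Fin m) ℂ :=
  fourierM m * Matrix.diagonal (fun r : Fin m => h (2 * Real.pi * (r : ℕ) / m)) * (fourierM m)ᴴ

/-- A trigonometric polynomial `ℝ → ℂ`. -/
def TrigPoly (h : ℝ → ℂ) : Prop :=
  ∃ (d : ℕ) (a : ℤ → ℂ), ∀ x : ℝ,
    h x = ∑ j ∈ Finset.Icc (-(d : ℤ)) (d : ℤ), a j * Complex.exp (Complex.I * (j : ℂ) * x)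

lemma exp_two_pi_int (k : ℤ) : Complex.exp (2 * π * Complex.I * k) = 1 := by
  have := Complex.exp_int_mul_two_pi_mul_I k
  rw [← this]; ring_nf

lemma key_sum (m : ℕ) (hm : 0 < m) (k : ℤ) :
    ∑ t : Fin m, Complex.exp (2 * π * Complex.I * k * t / m) =
      if (m : ℤ) ∣ k then (m : ℂ) else 0 := by
  have hm' : (m : ℂ) ≠ 0 := Nat.cast_ne_zero.mpr hm.ne'
  set ζ : ℂ := Complex.exp (2 * π * Complex.I * k / m) with hζ
  have hpow : ∀ t : ℕ, ζ ^ t = Complex.exp (2 * π * Complex.I * k * t / m) := by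
    intro t
    rw [hζ, ← Complex.exp_nat_mul]; ring_nf
  have hsum : ∑ t : Fin m, Complex.exp (2 * π * Complex.I * k * t / m)
      = ∑ t ∈ Finset.range m, ζ ^ t := by
    rw [← Fin.sum_univ_eq_sum_range (fun t => ζ ^ t) m]
    exact Finset.sum_congr rfl fun t _ => (hpow (t : ℕ)).symm
  rw [hsum]
  by_cases hd : (m : ℤ) ∣ k
  · obtain ⟨c, rfl⟩ := hd
    have hζ1 : ζ = 1 := by
      rw [hζ]
      have : (2 * π * Complex.I * ((m : ℤ) * c : ℤ) / m) = 2 * π * Complex.I * c := by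
        push_cast; field_simp
      rw [this, exp_two_pi_int]
    rw [if_pos ⟨c, rfl⟩]
    simp [hζ1]
  · have h2 : (2 * π * Complex.I : ℂ) ≠ 0 := by
      simp [Real.pi_ne_zero, Complex.I_ne_zero, Complex.ofReal_ne_zero]
    have hζ1 : ζ ≠ 1 := by
      intro h
      rw [hζ, Complex.exp_eq_one_iff] at h
      obtain ⟨c, hc⟩ := h
      apply hd
      refine ⟨c, ?_⟩
      have hck : (k : ℂ) = m * c := by
        have : (2 * π * Complex.I) * (k : ℂ) = (2 * π * Complex.I) * (m * c) := by
          field_simp at hc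
          linear_combination (2 * π * Complex.I) * hc
        exact mul_left_cancel₀ h2 this
      exact_mod_cast hck
    rw [geom_sum_eq hζ1]
    have hζm : ζ ^ m = 1 := by
      rw [hpow m]
      have : (2 * π * Complex.I * k * m / m) = 2 * π * Complex.I * k := by
        field_simp
      rw [this, exp_two_pi_int]
    simp [hζm, hd]

lemma sqrt_prod (m : ℕ) (hm : 0 < m) :
    (1 / ((Real.sqrt m : ℝ) : ℂ)) * (1 / ((Real.sqrt m : ℝ) : ℂ)) = 1 / (m : ℂ) := by
  rw [div_mul_div_comm, one_mul, ← Complex.ofReal_mul,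
    Real.mul_self_sqrt (Nat.cast_nonneg m)]
  norm_num

lemma fourier_unitary (m : ℕ) (hm : 0 < m) : (fourierM m)ᴴ * fourierM m = 1 := by
  have hm' : (m : ℂ) ≠ 0 := Nat.cast_ne_zero.mpr hm.ne'
  ext r s
  rw [Matrix.mul_apply]
  have step : ∀ t : Fin m, (fourierM m)ᴴ r t * fourierM m t s =
      (1 / (m : ℂ)) * Complex.exp (2 * π * Complex.I * ((((r : ℕ) : ℤ) - ((s : ℕ) : ℤ) : ℤ) : ℂ) * t / m) := by
    intro t
    simp only [Matrix.conjTranspose_apply, fourierM, Complex.star_def]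
    rw [_root_.map_mul, map_div₀, _root_.map_one, Complex.conj_ofReal, ← Complex.exp_conj,
      mul_mul_mul_comm, sqrt_prod m hm, ← Complex.exp_add]
    congr 1
    simp only [map_div₀, _root_.map_mul, map_neg, Complex.conj_I, Complex.conj_ofReal,
      Complex.conj_natCast, map_ofNat]
    push_cast
    field_simp
    ring
  rw [Finset.sum_congr rfl fun t _ => step t, ← Finset.mul_sum, key_sum m hm]
  by_cases h : r = s
  · subst h
    rw [if_pos (by simp)]
    field_simp
    simp
  · rw [if_neg, mul_zero]
    · simp [Matrix.one_apply, h]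
    · intro hd
      have := Int.eq_zero_of_abs_lt_dvd hd ?_
      · apply h; apply Fin.ext; omega
      · have h1 : ((r:ℕ):ℤ) < m := by exact_mod_cast r.isLt
        have h2 : ((s:ℕ):ℤ) < m := by exact_mod_cast s.isLt
        rw [abs_sub_lt_iff]; omega

lemma circ_conjT (m : ℕ) (h : ℝ → ℂ) :
    (circ m h)ᴴ = circ m (fun x => (starRingEnd ℂ) (h x)) := by
  simp only [circ, Matrix.conjTranspose_mul, Matrix.conjTranspose_conjTranspose,
    Matrix.diagonal_conjTranspose, Matrix.mul_assoc]
  rfl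

lemma circ_mul (m : ℕ) (hm : 0 < m) (h₁ h₂ : ℝ → ℂ) :
    circ m h₁ * circ m h₂ = circ m (fun x => h₁ x * h₂ x) := by
  simp only [circ]
  rw [Matrix.mul_assoc (fourierM m * _), ← Matrix.mul_assoc (fourierM m)ᴴ,
    ← Matrix.mul_assoc (fourierM m)ᴴ, fourier_unitary m hm, Matrix.one_mul,
    ← Matrix.mul_assoc, Matrix.mul_assoc (fourierM m), Matrix.diagonal_mul_diagonal,
    Matrix.mul_assoc]

lemma circ_apply (m : ℕ) (hm : 0 < m) (h : ℝ → ℂ) (a b : Fin m) :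
    circ m h a b = (1 / (m : ℂ)) * ∑ t : Fin m,
      h (2 * π * (t : ℕ) / m) *
        Complex.exp (2 * π * Complex.I * ((((b : ℕ) : ℤ) - ((a : ℕ) : ℤ) : ℤ) : ℂ) * t / m) := by
  simp only [circ]
  rw [Matrix.mul_apply]
  simp only [Matrix.mul_diagonal, Matrix.conjTranspose_apply, Finset.mul_sum]
  refine Finset.sum_congr rfl fun t _ => ?_
  simp only [fourierM, Complex.star_def]
  rw [_root_.map_mul, map_div₀, _root_.map_one, Complex.conj_ofReal, ← Complex.exp_conj]
  have harg : (starRingEnd ℂ) (-2 * (π : ℂ) * Complex.I * ((b : ℕ) : ℂ) * ((t : ℕ) : ℂ) / m)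
      = 2 * (π : ℂ) * Complex.I * ((b : ℕ) : ℂ) * ((t : ℕ) : ℂ) / m := by
    simp only [map_div₀, _root_.map_mul, map_neg, Complex.conj_I, Complex.conj_ofReal,
      Complex.conj_natCast, map_ofNat]
    ring
  rw [harg]
  rw [show (1 / ((Real.sqrt m : ℝ) : ℂ)) * Complex.exp (-2 * (π:ℂ) * Complex.I * ((a:ℕ):ℂ) * ((t:ℕ):ℂ) / m) *
        h (2 * π * (t : ℕ) / m) *
        ((1 / ((Real.sqrt m : ℝ) : ℂ)) * Complex.exp (2 * (π:ℂ) * Complex.I * ((b:ℕ):ℂ) * ((t:ℕ):ℂ) / m))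
      = ((1 / ((Real.sqrt m : ℝ) : ℂ)) * (1 / ((Real.sqrt m : ℝ) : ℂ))) *
        (h (2 * π * (t : ℕ) / m) *
          (Complex.exp (-2 * (π:ℂ) * Complex.I * ((a:ℕ):ℂ) * ((t:ℕ):ℂ) / m) *
            Complex.exp (2 * (π:ℂ) * Complex.I * ((b:ℕ):ℂ) * ((t:ℕ):ℂ) / m))) from by ring,
    sqrt_prod m hm, ← Complex.exp_add]
  rw [show Complex.exp (-2 * (π:ℂ) * Complex.I * ((a:ℕ):ℂ) * ((t:ℕ):ℂ) / m +
        2 * (π:ℂ) * Complex.I * ((b:ℕ):ℂ) * ((t:ℕ):ℂ) / m)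
      = Complex.exp (2 * π * Complex.I * ((((b : ℕ) : ℤ) - ((a : ℕ) : ℤ) : ℤ) : ℂ) * t / m) from by
    congr 1
    push_cast
    field_simp
    ring]

lemma downsample (g N : ℕ) (hg : 0 < g) (hN : 0 < N) (q : ℝ → ℂ)
    (K : Matrix (Fin N) (Fin (g * N)) ℂ)
    (hK : K = fun (r : Fin N) (s : Fin (g * N)) => if (s : ℕ) = g * (r : ℕ) then (1:ℂ) else 0) :
    K * circ (g * N) q * Kᵀ = circ N (fun x =>
      (1 / (g : ℂ)) * ∑ j ∈ Finset.range g, q (x / g + 2 * π * j / g)) := by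
  have hn : 0 < g * N := Nat.mul_pos hg hN
  have hgC : (g : ℂ) ≠ 0 := Nat.cast_ne_zero.mpr hg.ne'
  have hNC : (N : ℂ) ≠ 0 := Nat.cast_ne_zero.mpr hN.ne'
  have hgR : (g : ℝ) ≠ 0 := Nat.cast_ne_zero.mpr hg.ne'
  have hNR : (N : ℝ) ≠ 0 := Nat.cast_ne_zero.mpr hN.ne'
  set emb : Fin N → Fin (g * N) := fun r =>
    ⟨g * (r : ℕ), (Nat.mul_lt_mul_left hg).mpr r.isLt⟩ with hemb
  have hKe : ∀ (a : Fin N) (s : Fin (g * N)), K a s = if s = emb a then (1 : ℂ) else 0 := by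
    intro a s
    rw [hK]
    simp only [hemb, Fin.ext_iff]
  ext r r'
  have stepA : (K * circ (g * N) q * Kᵀ) r r' = circ (g * N) q (emb r) (emb r') := by
    rw [Matrix.mul_apply]
    simp only [Matrix.transpose_apply, hKe, mul_ite, mul_one, mul_zero]
    rw [Finset.sum_ite_eq' Finset.univ (emb r')]
    simp only [Finset.mem_univ, if_true]
    rw [Matrix.mul_apply]
    simp only [hKe, ite_mul, one_mul, zero_mul]
    rw [Finset.sum_ite_eq' Finset.univ (emb r)]
    simp [Finset.mem_univ]
  rw [stepA, circ_apply _ hn, circ_apply _ hN]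
  have hconst : (1 / ((g * N : ℕ) : ℂ)) = (1 / (N : ℂ)) * (1 / (g : ℂ)) := by
    push_cast; field_simp
  rw [hconst]
  rw [show (∑ t : Fin N, (1 / (g : ℂ) * ∑ j ∈ Finset.range g,
        q (2 * π * (t : ℕ) / N / g + 2 * π * j / g)) *
        Complex.exp (2 * π * Complex.I * ((((r' : ℕ) : ℤ) - ((r : ℕ) : ℤ) : ℤ) : ℂ) * t / N))
      = (1 / (g : ℂ)) * ∑ t : Fin N, ∑ j ∈ Finset.range g,
        q (2 * π * (t : ℕ) / N / g + 2 * π * j / g) *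
        Complex.exp (2 * π * Complex.I * ((((r' : ℕ) : ℤ) - ((r : ℕ) : ℤ) : ℤ) : ℂ) * t / N) from by
    rw [Finset.mul_sum]
    exact Finset.sum_congr rfl fun t _ => by rw [mul_assoc, Finset.sum_mul]]
  rw [mul_assoc]
  congr 1
  congr 1
  rw [← Equiv.sum_comp (finProdFinEquiv : Fin g × Fin N ≃ Fin (g * N))]
  rw [Fintype.sum_prod_type]
  rw [Finset.sum_comm]
  refine Finset.sum_congr rfl fun t _ => ?_
  rw [← Fin.sum_univ_eq_sum_range (fun j => q (2 * π * (t : ℕ) / N / g + 2 * π * (j:ℕ) / g) *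
        Complex.exp (2 * π * Complex.I * ((((r' : ℕ) : ℤ) - ((r : ℕ) : ℤ) : ℤ) : ℂ) * t / N)) g]
  refine Finset.sum_congr rfl fun j _ => ?_
  have hval : ((finProdFinEquiv ((j, t) : Fin g × Fin N) : Fin (g * N)) : ℕ)
      = (t : ℕ) + N * (j : ℕ) := rfl
  have hembv : ∀ a : Fin N, ((emb a : Fin (g * N)) : ℕ) = g * (a : ℕ) := fun a => rfl
  rw [hval, hembv, hembv]
  have harg1 : 2 * π * (((t : ℕ) + N * (j : ℕ) : ℕ) : ℝ) / ((g * N : ℕ) : ℝ)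
      = 2 * π * (t : ℕ) / N / g + 2 * π * (j : ℕ) / g := by
    push_cast; field_simp
  have harg2 : 2 * π * Complex.I *
        ((((g * (r' : ℕ) : ℕ) : ℤ) - ((g * (r : ℕ) : ℕ) : ℤ) : ℤ) : ℂ) *
        (((t : ℕ) + N * (j : ℕ) : ℕ) : ℂ) / ((g * N : ℕ) : ℂ)
      = 2 * π * Complex.I * ((((r' : ℕ) : ℤ) - ((r : ℕ) : ℤ) : ℤ) : ℂ) * t / N
        + 2 * π * Complex.I * ((((((r' : ℕ) : ℤ) - ((r : ℕ) : ℤ)) * ((j : ℕ) : ℤ)) : ℤ) : ℂ) := by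
    push_cast; field_simp
  rw [harg1, harg2, Complex.exp_add, exp_two_pi_int, mul_one]

theorem stmt16 (g N : ℕ) (hg : 2 ≤ g) (hN : 0 < N) (f p : ℝ → ℂ)
    (hf : TrigPoly f) (hp : TrigPoly p) :
    let n := g * N
    let K : Matrix (Fin N) (Fin n) ℂ := fun r s => if (s : ℕ) = g * (r : ℕ) then 1 else 0
    let P : Matrix (Fin n) (Fin N) ℂ := circ n p * Kᵀ
    Pᴴ * circ n f * P = circ N (fun x => (1 / g) * ∑ j ∈ Finset.range g,
      f (x / g + 2 * π * j / g) * ((‖p (x / g + 2 * π * j / g)‖ : ℝ) : ℂ) ^ 2) := by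
  intro n K P
  have hg0 : 0 < g := lt_of_lt_of_le two_pos hg
  have hn : 0 < n := Nat.mul_pos hg0 hN
  have hKH : Kᵀᴴ = K := by
    ext a b
    simp only [Matrix.conjTranspose_apply, Matrix.transpose_apply, K]
    split <;> simp [Matrix.transpose, *]
  have hPH : Pᴴ = K * (circ n p)ᴴ := by
    simp only [P, Matrix.conjTranspose_mul, hKH]
  rw [hPH, circ_conjT, show P = circ n p * Kᵀ from rfl, ← Matrix.mul_assoc,
    Matrix.mul_assoc K, circ_mul n hn, Matrix.mul_assoc K, circ_mul n hn]
  rw [downsample g N hg0 hN _ K rfl]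
  congr 1
  funext x
  have key : ∀ θ : ℝ, (starRingEnd ℂ) (p θ) * f θ * p θ
      = f θ * ((‖p θ‖ : ℝ) : ℂ) ^ 2 := by
    intro θ
    rw [show (((‖p θ‖ : ℝ) : ℂ)) ^ 2 = (((‖p θ‖ ^ 2 : ℝ)) : ℂ) by
        push_cast; ring,
      Complex.sq_norm, Complex.normSq_eq_conj_mul_self]
    ring
  simp only [key]
end

section
/- Let f, p be real trigonometric polynomials with f(x₀) = 0 and f(x) > 0 for x ∈ [0, 2π) \ {x₀}. Suppose (i) for each y ∈ M_g(x₀) = {x₀ + 2πj/g mod 2π : j = 1, …, g-1}, the limit lim_{x→x₀} |p(x + (y - x₀))|²/f(x) is finite where p vanishes appropriately (equivalently the order of the zero of |p|² at y is at least the order of the zero of f at x₀), and (ii) |p(x₀)|² > 0. Then there exists γ > 0 such that for all x ∈ [0, 2π), the g×g matrix I_g − p[x]^H p[x]/‖p[x]‖₂² ⪯ (γ/a₀)·diag(f[x]), where p[x] = (p(y₀), …, p(y_{g-1})), f[x] = (f(y₀), …, f(y_{g-1})), y_j = x + 2πj/g mod 2π, and a₀ = (1/2π)∫₀^{2π} f.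 -/
open Real Finset Filter

lemma trigP {q : ℝ → ℝ} (h : ∃ (d : ℕ) (a : ℤ → ℂ), ∀ x : ℝ,
      (q x : ℂ) = ∑ j ∈ Finset.Icc (-(d : ℤ)) (d : ℤ), a j * Complex.exp (Complex.I * (j : ℂ) * x)) :
    Continuous q ∧ Function.Periodic q (2 * π) := by
  obtain ⟨d, a, ha⟩ := h
  constructor
  · have hc : Continuous fun x : ℝ =>
        (∑ j ∈ Finset.Icc (-(d : ℤ)) (d : ℤ), a j * Complex.exp (Complex.I * (j : ℂ) * x)).re := by
      apply Complex.continuous_re.comp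
      apply continuous_finset_sum
      intro j _
      exact continuous_const.mul (Complex.continuous_exp.comp
        (continuous_const.mul Complex.continuous_ofReal))
    have : q = fun x : ℝ => (∑ j ∈ Finset.Icc (-(d : ℤ)) (d : ℤ),
        a j * Complex.exp (Complex.I * (j : ℂ) * (x : ℂ))).re := by
      funext x
      rw [← Complex.ofReal_re (q x), ha x]
    rw [this]; exact hc
  · intro x
    have : (q (x + 2 * π) : ℂ) = (q x : ℂ) := by
      rw [ha, ha]
      apply Finset.sum_congr rfl
      intro j _
      congr 1
      rw [show ((x + 2 * π : ℝ) : ℂ) = (x : ℂ) + 2 * π by push_cast; ring]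
      rw [show Complex.I * j * ((x:ℂ) + 2 * π) = Complex.I * j * x + j * (2 * π * Complex.I) by ring]
      rw [Complex.exp_add, Complex.exp_int_mul_two_pi_mul_I, mul_one]
    exact_mod_cast this


lemma quad_ineq {n : ℕ} (v w : Fin n → ℝ) (t : ℝ) (hS : 0 < ∑ k, v k ^ 2) :
    (∑ k, w k ^ 2) - (∑ k, v k * w k) ^ 2 * (∑ k, v k ^ 2)⁻¹ ≤
      ∑ k, (w k - t * v k) ^ 2 := by
  set S := ∑ k, v k ^ 2 with hSdef
  set d := ∑ k, v k * w k with hddef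
  have expand : ∑ k, (w k - t * v k) ^ 2 = (∑ k, w k ^ 2) - 2 * t * d + t ^ 2 * S := by
    rw [hddef, hSdef, Finset.mul_sum, Finset.mul_sum, ← Finset.sum_sub_distrib,
      ← Finset.sum_add_distrib]
    exact Finset.sum_congr rfl fun k _ => by ring
  rw [expand]
  have e : (d - t * S) ^ 2 * S⁻¹ = d ^ 2 * S⁻¹ - 2 * t * d + t ^ 2 * S := by
    field_simp
    ring
  have h1 : 0 ≤ (d - t * S) ^ 2 * S⁻¹ := by positivity
  rw [e] at h1
  linarith

set_option maxHeartbeats 2000000 in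
lemma localA (g : ℕ) (hg : 2 ≤ g) (f p : ℝ → ℝ) (x₀ : ℝ)
    (hpc : Continuous p) (hfc : Continuous f)
    (hfper : Function.Periodic f (2 * π)) (hpper : Function.Periodic p (2 * π))
    (hfnn : ∀ y, 0 ≤ f y)
    (hfpos' : ∀ y, (¬ ∃ n : ℤ, y = x₀ + 2 * π * n) → 0 < f y)
    (hii : 0 < p x₀ ^ 2)
    (C : ℝ) (hC : 0 < C)
    (hCev : ∀ᶠ x in nhds x₀, ∀ m ∈ Finset.Ico 1 g, p (x + 2 * π * m / g) ^ 2 ≤ C * f x)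
    (xb : ℝ) :
    ∃ K : ℝ, 0 < K ∧ ∀ᶠ x in nhds xb, ∀ w : Fin g → ℝ,
      (∑ j : Fin g, w j ^ 2) - (∑ j : Fin g, p (x + 2 * π * ((j : ℕ) : ℝ) / g) * w j) ^ 2 *
          (∑ j : Fin g, p (x + 2 * π * ((j : ℕ) : ℝ) / g) ^ 2)⁻¹
        ≤ K * ∑ j : Fin g, f (x + 2 * π * ((j : ℕ) : ℝ) / g) * w j ^ 2 := by
  haveI : NeZero g := ⟨by omega⟩
  have h2π : (0 : ℝ) < 2 * π := by positivity
  have hgpos : (0 : ℝ) < g := by positivity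
  by_cases hB : ∃ j : Fin g, ∃ n : ℤ, xb + 2 * π * ((j : ℕ) : ℝ) / g = x₀ + 2 * π * n
  · -- Case B: one of the nodes is congruent to x₀
    obtain ⟨j₀, n, hj₀⟩ := hB
    have hc : (0 : ℝ) < p x₀ ^ 2 / 2 := by positivity
    have hvj₀ : p (xb + 2 * π * ((j₀ : ℕ) : ℝ) / g) = p x₀ := by
      rw [hj₀]
      have h := hpper.sub_zsmul_eq n (x := x₀ + 2 * π * (n : ℝ))
      have e : x₀ + 2 * π * (n : ℝ) - n • (2 * π) = x₀ := by
        rw [zsmul_eq_mul]; ring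
      rw [e] at h
      exact h.symm
    have hknot : ∀ k : Fin g, k ≠ j₀ →
        ¬ ∃ m : ℤ, xb + 2 * π * ((k : ℕ) : ℝ) / g = x₀ + 2 * π * m := by
      rintro k hk ⟨m, hm⟩
      have hkj : (k : ℕ) ≠ (j₀ : ℕ) := fun h => hk (Fin.ext h)
      have hm' : xb * g + 2 * π * ((k : ℕ) : ℝ) = x₀ * g + 2 * π * m * g := by
        have := hm
        field_simp at this
        linarith
      have hj' : xb * g + 2 * π * ((j₀ : ℕ) : ℝ) = x₀ * g + 2 * π * n * g := by
        have := hj₀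
        field_simp at this
        linarith
      have h7 : (2 * π) * (((k : ℕ) : ℝ) - ((j₀ : ℕ) : ℝ)) =
          (2 * π) * ((m : ℝ) * g - (n : ℝ) * g) := by linarith
      have h8 := mul_left_cancel₀ (ne_of_gt h2π) h7
      have h9 : ((k : ℕ) : ℤ) - ((j₀ : ℕ) : ℤ) = m * g - n * g := by exact_mod_cast h8
      have hklt : (k : ℕ) < g := k.isLt
      have hjlt : (j₀ : ℕ) < g := j₀.isLt
      set q : ℤ := m - n with hq
      have h10 : ((k : ℕ) : ℤ) - ((j₀ : ℕ) : ℤ) = g * q := by rw [hq]; ring_nf; linarith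
      have hjlt' : ((j₀ : ℕ) : ℤ) < (g : ℤ) := by exact_mod_cast hjlt
      have hklt' : ((k : ℕ) : ℤ) < (g : ℤ) := by exact_mod_cast hklt
      have hk0 : (0 : ℤ) ≤ ((k : ℕ) : ℤ) := Int.ofNat_nonneg _
      have hj0 : (0 : ℤ) ≤ ((j₀ : ℕ) : ℤ) := Int.ofNat_nonneg _
      rcases lt_trichotomy q 0 with h | h | h
      · have hq1 : q ≤ -1 := by omega
        have h11 : (g : ℤ) * q ≤ -(g : ℤ) := by nlinarith
        linarith
      · rw [h, mul_zero] at h10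
        have : ((k : ℕ) : ℤ) = ((j₀ : ℕ) : ℤ) := by linarith
        exact hkj (by exact_mod_cast this)
      · have hq1 : 1 ≤ q := by omega
        have h11 : (g : ℤ) ≤ (g : ℤ) * q := by nlinarith
        linarith
    have hδ : ∀ k : Fin g, k ≠ j₀ → 0 < f (xb + 2 * π * ((k : ℕ) : ℝ) / g) :=
      fun k hk => hfpos' _ (hknot k hk)
    -- transfer bound
    have hT : Tendsto (fun x => x + 2 * π * ((j₀ : ℕ) : ℝ) / g - 2 * π * n)
        (nhds xb) (nhds x₀) := by
      have hcont : Continuous fun x : ℝ => x + 2 * π * ((j₀ : ℕ) : ℝ) / g - 2 * π * n :=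
        (continuous_id.add continuous_const).sub continuous_const
      have h := hcont.tendsto xb
      rw [show xb + 2 * π * ((j₀ : ℕ) : ℝ) / g - 2 * π * n = x₀ by linarith] at h
      exact h
    have hEv3 := hT.eventually hCev
    have hEv3' : ∀ᶠ x in nhds xb, ∀ k : Fin g, k ≠ j₀ →
        p (x + 2 * π * ((k : ℕ) : ℝ) / g) ^ 2 ≤ C * f (x + 2 * π * ((j₀ : ℕ) : ℝ) / g) := by
      filter_upwards [hEv3] with x hx
      intro k hk
      have hkj : (k : ℕ) ≠ (j₀ : ℕ) := fun h => hk (Fin.ext h)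
      have hklt : (k : ℕ) < g := k.isLt
      have hjlt : (j₀ : ℕ) < g := j₀.isLt
      have hfarg : x + 2 * π * ((j₀ : ℕ) : ℝ) / g - 2 * π * n =
          (x + 2 * π * ((j₀ : ℕ) : ℝ) / g) - n • (2 * π) := by
        rw [zsmul_eq_mul]; ring
      by_cases hcase : (j₀ : ℕ) < (k : ℕ)
      · set m : ℕ := (k : ℕ) - (j₀ : ℕ) with hmdef
        have hmem : m ∈ Finset.Ico 1 g := by rw [Finset.mem_Ico]; omega
        have hb := hx m hmem
        have hcast : (m : ℝ) = ((k : ℕ) : ℝ) - ((j₀ : ℕ) : ℝ) := by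
          rw [hmdef]; push_cast [Nat.cast_sub hcase.le]; ring
        have harg : x + 2 * π * ((j₀ : ℕ) : ℝ) / g - 2 * π * n + 2 * π * m / g =
            (x + 2 * π * ((k : ℕ) : ℝ) / g) - n • (2 * π) := by
          rw [zsmul_eq_mul, hcast]; ring
        rw [harg, hpper.sub_zsmul_eq, hfarg, hfper.sub_zsmul_eq] at hb
        exact hb
      · set m : ℕ := (k : ℕ) + g - (j₀ : ℕ) with hmdef
        have hmem : m ∈ Finset.Ico 1 g := by rw [Finset.mem_Ico]; omega
        have hb := hx m hmem
        have hcast : (m : ℝ) = ((k : ℕ) : ℝ) + g - ((j₀ : ℕ) : ℝ) := by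
          rw [hmdef]; push_cast [Nat.cast_sub (by omega : (j₀ : ℕ) ≤ (k : ℕ) + g)]; ring
        have harg : x + 2 * π * ((j₀ : ℕ) : ℝ) / g - 2 * π * n + 2 * π * m / g =
            (x + 2 * π * ((k : ℕ) : ℝ) / g) - (n - 1) • (2 * π) := by
          rw [zsmul_eq_mul, hcast]
          push_cast
          field_simp
          ring
        rw [harg, hpper.sub_zsmul_eq, hfarg, hfper.sub_zsmul_eq] at hb
        exact hb
    have hEv2 : ∀ᶠ x in nhds xb,
        p x₀ ^ 2 / 2 < p (x + 2 * π * ((j₀ : ℕ) : ℝ) / g) ^ 2 := by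
      have hcont : Continuous fun x : ℝ => p (x + 2 * π * ((j₀ : ℕ) : ℝ) / g) ^ 2 :=
        (hpc.comp (continuous_id.add continuous_const)).pow 2
      have h := hcont.tendsto xb
      rw [show p (xb + 2 * π * ((j₀ : ℕ) : ℝ) / g) ^ 2 = p x₀ ^ 2 by rw [hvj₀]] at h
      exact h.eventually_const_lt (by linarith)
    have hEv1 : ∀ᶠ x in nhds xb, ∀ k : Fin g, k ≠ j₀ →
        f (xb + 2 * π * ((k : ℕ) : ℝ) / g) / 2 < f (x + 2 * π * ((k : ℕ) : ℝ) / g) := by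
      rw [Filter.eventually_all]
      intro k
      by_cases hk : k = j₀
      · exact Filter.Eventually.of_forall fun x h => absurd hk h
      · have hcont : Continuous fun x : ℝ => f (x + 2 * π * ((k : ℕ) : ℝ) / g) :=
          hfc.comp (continuous_id.add continuous_const)
        have h := (hcont.tendsto xb).eventually_const_lt
          (by linarith [hδ k hk] : f (xb + 2 * π * ((k : ℕ) : ℝ) / g) / 2 <
            f (xb + 2 * π * ((k : ℕ) : ℝ) / g))
        filter_upwards [h] with x hx _
        exact hx
    -- constants
    set K1 : ℝ := Finset.univ.sup' Finset.univ_nonempty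
      (fun k : Fin g => 4 / f (xb + 2 * π * ((k : ℕ) : ℝ) / g)) with hK1def
    set K2 : ℝ := 4 * g * C / p x₀ ^ 2 with hK2def
    have hK1 : 0 ≤ K1 := by
      refine le_trans ?_ (Finset.le_sup' (fun k : Fin g =>
        4 / f (xb + 2 * π * ((k : ℕ) : ℝ) / g)) (Finset.mem_univ j₀))
      have := hfnn (xb + 2 * π * ((j₀ : ℕ) : ℝ) / g)
      positivity
    have hK2 : 0 ≤ K2 := by positivity
    refine ⟨K1 + K2 + 1, by linarith, ?_⟩
    filter_upwards [hEv1, hEv2, hEv3'] with x h1 h2 h3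
    intro w
    set v : Fin g → ℝ := fun k => p (x + 2 * π * ((k : ℕ) : ℝ) / g) with hvdef
    set fv : Fin g → ℝ := fun k => f (x + 2 * π * ((k : ℕ) : ℝ) / g) with hfvdef
    have hvj : 0 < v j₀ ^ 2 := lt_trans hc h2
    have hvne : v j₀ ≠ 0 := by
      intro h
      rw [h] at hvj
      simp at hvj
    have hS : 0 < ∑ k, v k ^ 2 :=
      lt_of_lt_of_le hvj (Finset.single_le_sum (f := fun k => v k ^ 2)
        (fun i _ => sq_nonneg _) (Finset.mem_univ j₀))
    set t := w j₀ / v j₀ with htdef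
    have step1 := quad_ineq v w t hS
    have hfvnn : ∀ k : Fin g, 0 ≤ fv k * w k ^ 2 :=
      fun k => mul_nonneg (hfnn _) (sq_nonneg _)
    have step2 : ∑ k, (w k - t * v k) ^ 2 =
        ∑ k ∈ Finset.univ.erase j₀, (w k - t * v k) ^ 2 := by
      rw [← Finset.sum_erase_add _ _ (Finset.mem_univ j₀), htdef,
        div_mul_cancel₀ _ hvne, sub_self]
      norm_num
    have step3 : ∀ k ∈ Finset.univ.erase j₀, (w k - t * v k) ^ 2 ≤
        K1 * (fv k * w k ^ 2) + (K2 / g) * (fv j₀ * w j₀ ^ 2) := by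
      intro k hkmem
      have hk : k ≠ j₀ := (Finset.mem_erase.mp hkmem).1
      have hδk := hδ k hk
      have h1k := h1 k hk
      have hA : (w k - t * v k) ^ 2 ≤ 2 * w k ^ 2 + 2 * (t ^ 2 * v k ^ 2) := by
        nlinarith [sq_nonneg (w k + t * v k)]
      have hB1 : 2 * w k ^ 2 ≤ K1 * (fv k * w k ^ 2) := by
        have hle : 4 / f (xb + 2 * π * ((k : ℕ) : ℝ) / g) ≤ K1 :=
          Finset.le_sup' (fun k : Fin g => 4 / f (xb + 2 * π * ((k : ℕ) : ℝ) / g))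
            (Finset.mem_univ k)
        have hmid : 2 * w k ^ 2 ≤ 4 / f (xb + 2 * π * ((k : ℕ) : ℝ) / g) * (fv k * w k ^ 2) := by
          rw [div_mul_eq_mul_div, le_div_iff₀ hδk]
          nlinarith [sq_nonneg (w k)]
        exact hmid.trans (mul_le_mul_of_nonneg_right hle (hfvnn k))
      have hB2 : 2 * (t ^ 2 * v k ^ 2) ≤ (K2 / g) * (fv j₀ * w j₀ ^ 2) := by
        have ht2 : t ^ 2 = w j₀ ^ 2 / v j₀ ^ 2 := by rw [htdef, div_pow]
        have hvk : v k ^ 2 ≤ C * fv j₀ := h3 k hk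
        have hK2g : K2 / (g : ℝ) = 4 * C / p x₀ ^ 2 := by
          rw [hK2def]
          field_simp
        rw [ht2, hK2g, div_mul_eq_mul_div, div_mul_eq_mul_div,
          show 2 * (w j₀ ^ 2 * v k ^ 2 / v j₀ ^ 2) =
            (2 * (w j₀ ^ 2 * v k ^ 2)) / v j₀ ^ 2 by ring,
          div_le_div_iff₀ hvj hii]
        have hfvj : 0 ≤ fv j₀ := hfnn _
        have e1 : v k ^ 2 * p x₀ ^ 2 ≤ (C * fv j₀) * (2 * v j₀ ^ 2) :=
          mul_le_mul hvk (by linarith) (sq_nonneg _) (by positivity)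
        nlinarith [sq_nonneg (w j₀), mul_le_mul_of_nonneg_left e1
          (by positivity : (0:ℝ) ≤ 2 * w j₀ ^ 2)]
      linarith
    have step4 : ∑ k ∈ Finset.univ.erase j₀, (w k - t * v k) ^ 2 ≤
        K1 * (∑ k ∈ Finset.univ.erase j₀, fv k * w k ^ 2) +
          ((g : ℝ) - 1) * ((K2 / g) * (fv j₀ * w j₀ ^ 2)) := by
      calc ∑ k ∈ Finset.univ.erase j₀, (w k - t * v k) ^ 2
          ≤ ∑ k ∈ Finset.univ.erase j₀,
            (K1 * (fv k * w k ^ 2) + (K2 / g) * (fv j₀ * w j₀ ^ 2)) :=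
            Finset.sum_le_sum step3
        _ = K1 * (∑ k ∈ Finset.univ.erase j₀, fv k * w k ^ 2) +
            ((Finset.univ.erase j₀).card : ℝ) * ((K2 / g) * (fv j₀ * w j₀ ^ 2)) := by
            rw [Finset.sum_add_distrib, Finset.mul_sum, Finset.sum_const, nsmul_eq_mul]
        _ = _ := by
            congr 2
            rw [Finset.card_erase_of_mem (Finset.mem_univ j₀), Finset.card_univ,
              Fintype.card_fin]
            push_cast [Nat.cast_sub (by omega : 1 ≤ g)]
            ring
    -- assemble
    have herase_le : ∑ k ∈ Finset.univ.erase j₀, fv k * w k ^ 2 ≤ ∑ k, fv k * w k ^ 2 :=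
      Finset.sum_le_sum_of_subset_of_nonneg (Finset.subset_univ _)
        (fun i _ _ => hfvnn i)
    have hX_le : fv j₀ * w j₀ ^ 2 ≤ ∑ k, fv k * w k ^ 2 :=
      Finset.single_le_sum (f := fun k => fv k * w k ^ 2)
        (fun i _ => hfvnn i) (Finset.mem_univ j₀)
    have hT_nonneg : 0 ≤ ∑ k, fv k * w k ^ 2 := Finset.sum_nonneg fun i _ => hfvnn i
    have hXnn : 0 ≤ fv j₀ * w j₀ ^ 2 := hfvnn j₀
    have hgm1 : ((g : ℝ) - 1) * (K2 / g) ≤ K2 := by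
      rw [mul_div_assoc']
      rw [div_le_iff₀ hgpos]
      nlinarith
    have hfinal : ((g : ℝ) - 1) * ((K2 / g) * (fv j₀ * w j₀ ^ 2)) ≤
        K2 * (fv j₀ * w j₀ ^ 2) := by
      rw [← mul_assoc]
      exact mul_le_mul_of_nonneg_right hgm1 hXnn
    have hK1mul : K1 * (∑ k ∈ Finset.univ.erase j₀, fv k * w k ^ 2) ≤
        K1 * ∑ k, fv k * w k ^ 2 := mul_le_mul_of_nonneg_left herase_le hK1
    have hK2mul : K2 * (fv j₀ * w j₀ ^ 2) ≤ K2 * ∑ k, fv k * w k ^ 2 :=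
      mul_le_mul_of_nonneg_left hX_le hK2
    calc (∑ j, w j ^ 2) - (∑ j, v j * w j) ^ 2 * (∑ j, v j ^ 2)⁻¹
        ≤ ∑ k, (w k - t * v k) ^ 2 := step1
      _ = ∑ k ∈ Finset.univ.erase j₀, (w k - t * v k) ^ 2 := step2
      _ ≤ K1 * (∑ k ∈ Finset.univ.erase j₀, fv k * w k ^ 2) +
          ((g : ℝ) - 1) * ((K2 / g) * (fv j₀ * w j₀ ^ 2)) := step4
      _ ≤ (K1 + K2 + 1) * ∑ k, fv k * w k ^ 2 := by nlinarith
  · -- Case A : all nodes are away from x₀ mod 2π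
    push_neg at hB
    have hpos : ∀ j : Fin g, 0 < f (xb + 2 * π * ((j : ℕ) : ℝ) / g) := by
      intro j
      apply hfpos'
      rintro ⟨n, hn⟩
      exact hB j n hn
    set K : ℝ := Finset.univ.sup' Finset.univ_nonempty
      (fun j : Fin g => 2 / f (xb + 2 * π * ((j : ℕ) : ℝ) / g)) with hKdef
    have hKpos : 0 < K := by
      refine lt_of_lt_of_le ?_
        (Finset.le_sup' (fun j : Fin g => 2 / f (xb + 2 * π * ((j : ℕ) : ℝ) / g))
          (Finset.mem_univ (⟨0, by omega⟩ : Fin g)))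
      have := hpos (⟨0, by omega⟩ : Fin g)
      positivity
    refine ⟨K, hKpos, ?_⟩
    have hEv : ∀ᶠ x in nhds xb, ∀ j : Fin g,
        f (xb + 2 * π * ((j : ℕ) : ℝ) / g) / 2 < f (x + 2 * π * ((j : ℕ) : ℝ) / g) := by
      rw [Filter.eventually_all]
      intro j
      have hcont : Continuous fun x : ℝ => f (x + 2 * π * ((j : ℕ) : ℝ) / g) :=
        hfc.comp (continuous_id.add continuous_const)
      exact (hcont.tendsto xb).eventually_const_lt (by linarith [hpos j])
    filter_upwards [hEv] with x hx
    intro w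
    have hsub : 0 ≤ (∑ j : Fin g, p (x + 2 * π * ((j : ℕ) : ℝ) / g) * w j) ^ 2 *
        (∑ j : Fin g, p (x + 2 * π * ((j : ℕ) : ℝ) / g) ^ 2)⁻¹ := by positivity
    have hterm : ∀ j : Fin g, w j ^ 2 ≤ K * (f (x + 2 * π * ((j : ℕ) : ℝ) / g) * w j ^ 2) := by
      intro j
      have hle : 2 / f (xb + 2 * π * ((j : ℕ) : ℝ) / g) ≤ K :=
        Finset.le_sup' (fun j : Fin g => 2 / f (xb + 2 * π * ((j : ℕ) : ℝ) / g))
          (Finset.mem_univ j)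
      have hmid : w j ^ 2 ≤ 2 / f (xb + 2 * π * ((j : ℕ) : ℝ) / g) *
          (f (x + 2 * π * ((j : ℕ) : ℝ) / g) * w j ^ 2) := by
        rw [div_mul_eq_mul_div, le_div_iff₀ (hpos j)]
        nlinarith [sq_nonneg (w j), hx j]
      refine hmid.trans (mul_le_mul_of_nonneg_right hle ?_)
      exact mul_nonneg (hfnn _) (sq_nonneg _)
    calc (∑ j : Fin g, w j ^ 2) - (∑ j : Fin g, p (x + 2 * π * ((j : ℕ) : ℝ) / g) * w j) ^ 2 *
          (∑ j : Fin g, p (x + 2 * π * ((j : ℕ) : ℝ) / g) ^ 2)⁻¹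
        ≤ ∑ j : Fin g, w j ^ 2 := by linarith
      _ ≤ ∑ j : Fin g, K * (f (x + 2 * π * ((j : ℕ) : ℝ) / g) * w j ^ 2) :=
          Finset.sum_le_sum fun j _ => hterm j
      _ = K * ∑ j : Fin g, f (x + 2 * π * ((j : ℕ) : ℝ) / g) * w j ^ 2 := by
          rw [Finset.mul_sum]

lemma globalB {α : Type*} [Fintype α] (L R : ℝ → (α → ℝ) → ℝ)
    (hR : ∀ x w, 0 ≤ R x w)
    (hloc : ∀ xb : ℝ, ∃ K : ℝ, 0 < K ∧ ∀ᶠ x in nhds xb, ∀ w, L x w ≤ K * R x w) :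
    ∃ K : ℝ, 0 < K ∧ ∀ x ∈ Set.Icc (0 : ℝ) (2 * π), ∀ w, L x w ≤ K * R x w := by
  classical
  choose K hKpos hKev using hloc
  set U : ℝ → Set ℝ := fun xb => {x | ∀ w, L x w ≤ K xb * R x w} with hU
  obtain ⟨t, hts, hcover⟩ := (isCompact_Icc (a := (0 : ℝ)) (b := 2 * π)).elim_nhds_subcover U
    (fun xb _ => hKev xb)
  have hsum : 0 ≤ ∑ xb ∈ t, K xb := Finset.sum_nonneg fun i _ => (hKpos i).le
  refine ⟨1 + ∑ xb ∈ t, K xb, by linarith, ?_⟩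
  intro x hx w
  rcases Set.mem_iUnion₂.mp (hcover hx) with ⟨xb, hxbt, hxU⟩
  refine (hxU w).trans ?_
  apply mul_le_mul_of_nonneg_right _ (hR x w)
  have := Finset.single_le_sum (f := K) (fun i _ => (hKpos i).le) hxbt
  linarith

lemma matQF (g : ℕ) (v fv : Fin g → ℝ) (c : ℝ) (w : Fin g → ℝ) :
    dotProduct (star w)
      (((c • Matrix.diagonal fv -
        ((1 : Matrix (Fin g) (Fin g) ℝ) - (∑ j, v j ^ 2)⁻¹ • Matrix.vecMulVec v v))).mulVec w)
      = c * (∑ j, fv j * w j ^ 2) -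
        ((∑ j, w j ^ 2) - (∑ j, v j * w j) ^ 2 * (∑ j, v j ^ 2)⁻¹) := by
  set s := (∑ j, v j ^ 2)⁻¹ with hs
  rw [Matrix.sub_mulVec, Matrix.sub_mulVec, dotProduct_sub, dotProduct_sub,
    Matrix.smul_mulVec, Matrix.smul_mulVec, Matrix.one_mulVec,
    dotProduct_smul, dotProduct_smul]
  have h1 : dotProduct (star w) ((Matrix.diagonal fv).mulVec w)
      = ∑ j, fv j * w j ^ 2 := by
    simp only [dotProduct, Matrix.mulVec_diagonal, Pi.star_apply, star_trivial]
    exact Finset.sum_congr rfl fun j _ => by ring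
  have h2 : dotProduct (star w) w = ∑ j, w j ^ 2 := by
    simp only [dotProduct, Pi.star_apply, star_trivial]
    exact Finset.sum_congr rfl fun j _ => by ring
  have h3 : dotProduct (star w) ((Matrix.vecMulVec v v).mulVec w)
      = (∑ j, v j * w j) ^ 2 := by
    simp only [dotProduct, Matrix.mulVec, Matrix.vecMulVec_apply, Pi.star_apply,
      star_trivial]
    rw [sq, Finset.sum_mul]
    refine Finset.sum_congr rfl fun j _ => ?_
    simp only [Finset.mul_sum]
    exact Finset.sum_congr rfl fun i _ => by ring
  rw [h1, h2, h3, smul_eq_mul, smul_eq_mul]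
  ring

lemma matHerm (g : ℕ) (v fv : Fin g → ℝ) (c : ℝ) :
    ((c • Matrix.diagonal fv -
        ((1 : Matrix (Fin g) (Fin g) ℝ) -
          (∑ j, v j ^ 2)⁻¹ • Matrix.vecMulVec v v))).IsHermitian := by
  unfold Matrix.IsHermitian
  ext i j
  simp only [Matrix.conjTranspose_apply, Matrix.sub_apply, Matrix.smul_apply,
    Matrix.one_apply, Matrix.diagonal_apply, Matrix.vecMulVec_apply, star_trivial,
    smul_eq_mul]
  by_cases h : i = j
  · subst h; simp
  · simp [h, Ne.symm h, mul_comm]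

theorem stmt17 (g : ℕ) (hg : 2 ≤ g) (f p : ℝ → ℝ) (x₀ : ℝ)
    (hx₀ : x₀ ∈ Set.Ico (0 : ℝ) (2 * π))
    (hftrig : ∃ (d : ℕ) (a : ℤ → ℂ), ∀ x : ℝ,
      (f x : ℂ) = ∑ j ∈ Finset.Icc (-(d : ℤ)) (d : ℤ), a j * Complex.exp (Complex.I * (j : ℂ) * x))
    (hptrig : ∃ (d : ℕ) (a : ℤ → ℂ), ∀ x : ℝ,
      (p x : ℂ) = ∑ j ∈ Finset.Icc (-(d : ℤ)) (d : ℤ), a j * Complex.exp (Complex.I * (j : ℂ) * x))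
    (hf0 : f x₀ = 0)
    (hfpos : ∀ x ∈ Set.Ico (0 : ℝ) (2 * π), x ≠ x₀ → 0 < f x)
    (hi : ∀ j : ℕ, 1 ≤ j → j < g → ∃ c : ℝ,
      Tendsto (fun x => p (x + 2 * π * j / g) ^ 2 / f x) (nhdsWithin x₀ {x₀}ᶜ) (nhds c))
    (hii : 0 < p x₀ ^ 2) :
    ∃ γ : ℝ, 0 < γ ∧ ∀ x ∈ Set.Ico (0 : ℝ) (2 * π),
      let v : Fin g → ℝ := fun j => p (x + 2 * π * ((j : ℕ) : ℝ) / g)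
      let fv : Fin g → ℝ := fun j => f (x + 2 * π * ((j : ℕ) : ℝ) / g)
      let a₀ : ℝ := (1 / (2 * π)) * ∫ t in (0 : ℝ)..(2 * π), f t
      ((γ / a₀) • Matrix.diagonal fv -
        ((1 : Matrix (Fin g) (Fin g) ℝ) - (∑ j, v j ^ 2)⁻¹ • Matrix.vecMulVec v v)).PosSemidef := by
  obtain ⟨hfc, hfper⟩ := trigP hftrig
  obtain ⟨hpc, hpper⟩ := trigP hptrig
  have h2π : (0 : ℝ) < 2 * π := by positivity
  -- nonnegativity and positivity of f off the lattice x₀ + 2πℤ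
  have key : ∀ y : ℝ, f (toIcoMod h2π 0 y) = f y := by
    intro y
    have : toIcoMod h2π 0 y = y - toIcoDiv h2π 0 y • (2 * π) := rfl
    rw [this, hfper.sub_zsmul_eq]
  have mem : ∀ y : ℝ, toIcoMod h2π 0 y ∈ Set.Ico (0 : ℝ) (2 * π) := by
    intro y
    have := toIcoMod_mem_Ico h2π 0 y
    simpa using this
  have hfnn : ∀ y, 0 ≤ f y := by
    intro y
    rw [← key y]
    rcases eq_or_ne (toIcoMod h2π 0 y) x₀ with h | h
    · rw [h, hf0]
    · exact (hfpos _ (mem y) h).le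
  have hfpos' : ∀ y, (¬ ∃ n : ℤ, y = x₀ + 2 * π * n) → 0 < f y := by
    intro y hy
    rw [← key y]
    refine hfpos _ (mem y) ?_
    intro h
    apply hy
    refine ⟨toIcoDiv h2π 0 y, ?_⟩
    have : y = toIcoMod h2π 0 y + toIcoDiv h2π 0 y • (2 * π) := by
      exact (toIcoMod_add_toIcoDiv_zsmul h2π 0 y).symm
    rw [h] at this
    nth_rewrite 1 [this]
    push_cast [zsmul_eq_mul]
    ring
  -- f eventually positive on the punctured neighborhood of x₀
  have hfev : ∀ᶠ x in nhdsWithin x₀ {x₀}ᶜ, 0 < f x := by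
    have h1 : ∀ᶠ x in nhds x₀, |x - x₀| < 2 * π := by
      have := Metric.ball_mem_nhds x₀ h2π
      filter_upwards [this] with x hx
      simpa [Real.dist_eq] using hx
    rw [eventually_nhdsWithin_iff]
    filter_upwards [h1] with x hx hxne
    apply hfpos'
    rintro ⟨n, rfl⟩
    rcases eq_or_ne n 0 with rfl | hn
    · simp at hxne
    · have : (1 : ℝ) ≤ |(n : ℝ)| := by
        rw [← Int.cast_abs]
        exact_mod_cast Int.one_le_abs hn
      have : 2 * π ≤ |x₀ + 2 * π * n - x₀| := by
        rw [show x₀ + 2 * π * n - x₀ = 2 * π * n by ring, abs_mul, abs_of_pos h2π]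
        nlinarith
      linarith [hx]
  -- zeros of p at the shifted nodes
  have hzero : ∀ m : ℕ, 1 ≤ m → m < g → p (x₀ + 2 * π * m / g) = 0 := by
    intro m h1 h2
    obtain ⟨c, hc⟩ := hi m h1 h2
    have hf0' : Tendsto f (nhdsWithin x₀ {x₀}ᶜ) (nhds 0) := by
      rw [← hf0]
      exact (hfc.tendsto x₀).mono_left nhdsWithin_le_nhds
    have hprod : Tendsto (fun x => (p (x + 2 * π * m / g) ^ 2 / f x) * f x)
        (nhdsWithin x₀ {x₀}ᶜ) (nhds (c * 0)) := hc.mul hf0'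
    have heq : (fun x => (p (x + 2 * π * m / g) ^ 2 / f x) * f x) =ᶠ[nhdsWithin x₀ {x₀}ᶜ]
        (fun x => p (x + 2 * π * m / g) ^ 2) := by
      filter_upwards [hfev] with x hx
      field_simp
    have h3 : Tendsto (fun x => p (x + 2 * π * m / g) ^ 2) (nhdsWithin x₀ {x₀}ᶜ)
        (nhds (p (x₀ + 2 * π * m / g) ^ 2)) := by
      have : Continuous fun x : ℝ => p (x + 2 * π * m / g) ^ 2 :=
        (hpc.comp (continuous_id.add continuous_const)).pow 2
      exact (this.tendsto x₀).mono_left nhdsWithin_le_nhds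
    have := tendsto_nhds_unique h3 (hprod.congr' heq)
    rw [mul_zero] at this
    exact pow_eq_zero_iff (n := 2) (by norm_num) |>.mp this
  -- the uniform local bound from condition (i)
  have H : ∀ m ∈ Finset.Ico 1 g, ∃ C : ℝ, 0 < C ∧ ∀ᶠ x in nhds x₀,
      p (x + 2 * π * m / g) ^ 2 ≤ C * f x := by
    intro m hm
    rw [Finset.mem_Ico] at hm
    obtain ⟨c, hc⟩ := hi m hm.1 hm.2
    refine ⟨|c| + 1, by positivity, ?_⟩
    have hev : ∀ᶠ x in nhdsWithin x₀ {x₀}ᶜ, p (x + 2 * π * m / g) ^ 2 ≤ (|c| + 1) * f x := by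
      have hlt : ∀ᶠ x in nhdsWithin x₀ {x₀}ᶜ,
          p (x + 2 * π * m / g) ^ 2 / f x < |c| + 1 := by
        apply hc.eventually_lt_const
        calc c ≤ |c| := le_abs_self c
        _ < |c| + 1 := by linarith
      filter_upwards [hlt, hfev] with x h1 h2
      rw [div_lt_iff₀ h2] at h1
      linarith
    rw [eventually_nhdsWithin_iff] at hev
    filter_upwards [hev] with x hx
    rcases eq_or_ne x x₀ with rfl | hne
    · rw [hf0, mul_zero, hzero m hm.1 hm.2]
      norm_num
    · exact hx hne
  classical
  choose! C0 hC0pos hC0ev using H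
  set C : ℝ := ∑ m ∈ Finset.Ico 1 g, C0 m with hCdef
  have hC : 0 < C := by
    apply Finset.sum_pos
    · intro m hm; exact hC0pos m hm
    · refine ⟨1, ?_⟩
      rw [Finset.mem_Ico]
      omega
  have hCev : ∀ᶠ x in nhds x₀, ∀ m ∈ Finset.Ico 1 g,
      p (x + 2 * π * m / g) ^ 2 ≤ C * f x := by
    rw [Filter.eventually_all_finset]
    intro m hm
    filter_upwards [hC0ev m hm] with x hx
    refine hx.trans ?_
    apply mul_le_mul_of_nonneg_right _ (hfnn x)
    exact Finset.single_le_sum (fun i hi => (hC0pos i hi).le) hm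
  -- positivity of the mean a₀
  have hint : 0 < ∫ t in (0:ℝ)..(2 * π), f t := by
    rcases eq_or_ne x₀ 0 with rfl | hne
    · apply intervalIntegral.intervalIntegral_pos_of_pos_on
        (hfc.intervalIntegrable _ _) _ h2π
      intro x hx
      exact hfpos x ⟨hx.1.le, hx.2⟩ hx.1.ne'
    · have hx0 : 0 < x₀ := lt_of_le_of_ne hx₀.1 (Ne.symm hne)
      have hsplit : (∫ t in (0:ℝ)..x₀, f t) + ∫ t in x₀..(2 * π), f t
          = ∫ t in (0:ℝ)..(2 * π), f t :=
        intervalIntegral.integral_add_adjacent_intervals (hfc.intervalIntegrable _ _)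
          (hfc.intervalIntegrable _ _)
      rw [← hsplit]
      have h1 : 0 < ∫ t in (0:ℝ)..x₀, f t := by
        apply intervalIntegral.intervalIntegral_pos_of_pos_on
          (hfc.intervalIntegrable _ _) _ hx0
        intro x hx
        exact hfpos x ⟨hx.1.le, hx.2.trans hx₀.2⟩ hx.2.ne
      have h2 : 0 ≤ ∫ t in x₀..(2 * π), f t :=
        intervalIntegral.integral_nonneg hx₀.2.le (fun u _ => hfnn u)
      linarith
  set A : ℝ := (1 / (2 * π)) * ∫ t in (0 : ℝ)..(2 * π), f t with hAdef
  have hA : 0 < A := by positivity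
  -- the global quadratic form bound
  obtain ⟨K, hKpos, hKglob⟩ := globalB
    (fun x (w : Fin g → ℝ) => (∑ j : Fin g, w j ^ 2) -
      (∑ j : Fin g, p (x + 2 * π * ((j : ℕ) : ℝ) / g) * w j) ^ 2 *
        (∑ j : Fin g, p (x + 2 * π * ((j : ℕ) : ℝ) / g) ^ 2)⁻¹)
    (fun x (w : Fin g → ℝ) => ∑ j : Fin g, f (x + 2 * π * ((j : ℕ) : ℝ) / g) * w j ^ 2)
    (fun x w => Finset.sum_nonneg fun j _ => mul_nonneg (hfnn _) (sq_nonneg _))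
    (fun xb => localA g hg f p x₀ hpc hfc hfper hpper hfnn hfpos' hii C hC hCev xb)
  refine ⟨K * A, by positivity, ?_⟩
  intro x hx
  intro v fv a₀
  have hKA : K * A / a₀ = K := by
    have : a₀ = A := rfl
    rw [this]
    field_simp
  rw [Matrix.posSemidef_iff_dotProduct_mulVec]
  constructor
  · exact matHerm g v fv (K * A / a₀)
  · intro w
    rw [matQF g v fv (K * A / a₀) w, hKA]
    have hglob := hKglob x ⟨hx.1, hx.2.le⟩ w
    have hRnn : (0:ℝ) ≤ ∑ j : Fin g, fv j * w j ^ 2 :=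
      Finset.sum_nonneg fun j _ => mul_nonneg (hfnn _) (sq_nonneg _)
    simp only [v, fv] at *
    linarith [hglob]
end

section
/- Let p be a trigonometric polynomial, g ≥ 2, x ∈ [0, 2π), and suppose p(y) = 0 for every y ∈ Ω_g(x) = {x + 2πj/g mod 2π : j = 0, …, g-1}. Let Θ = min over y ∈ Ω_g(x) of the order of the zero of p at y. Then h(x') = ∑_{j=0}^{g-1}|p(x' + 2πj/g)|² has a zero of order exactly 2Θ at x' = x, and for each s, h_s(x') = ∑_{j≠s}|p(x' + 2πj/g)|² has a zero of order at least 2Θ at x' = x. -/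
open Real Finset
open scoped ContDiff

private lemma itAdd {f g : ℝ → ℝ} {n : ℕ} (hf : ContDiff ℝ ∞ f) (hg : ContDiff ℝ ∞ g) (x : ℝ) :
    iteratedDeriv n (fun t => f t + g t) x = iteratedDeriv n f x + iteratedDeriv n g x := by
  have := iteratedFDeriv_add_apply (i := n) (hf.contDiffAt.of_le (by exact_mod_cast le_top)) (hg.contDiffAt.of_le (by exact_mod_cast le_top)) (x := x)
  simp only [iteratedDeriv_eq_iteratedFDeriv]
  rw [show (fun t => f t + g t) = f + g from rfl, this]
  rfl

private lemma leibniz (n : ℕ) : ∀ (f g : ℝ → ℝ), ContDiff ℝ ∞ f → ContDiff ℝ ∞ g → ∀ x : ℝ,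
    iteratedDeriv n (fun t => f t * g t) x
      = ∑ k ∈ Finset.range (n + 1),
          (n.choose k : ℝ) * iteratedDeriv k f x * iteratedDeriv (n - k) g x := by
  induction n with
  | zero => intro f g hf hg x; simp
  | succ n IH =>
    intro f g hf hg x
    have hf' : ContDiff ℝ ∞ (deriv f) := (contDiff_infty_iff_deriv.mp hf).2
    have hg' : ContDiff ℝ ∞ (deriv g) := (contDiff_infty_iff_deriv.mp hg).2
    have hfd : Differentiable ℝ f := (contDiff_infty_iff_deriv.mp hf).1
    have hgd : Differentiable ℝ g := (contDiff_infty_iff_deriv.mp hg).1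
    have hder : deriv (fun t => f t * g t)
        = fun t => deriv f t * g t + f t * deriv g t := by
      funext t
      exact deriv_mul (hfd t) (hgd t)
    rw [iteratedDeriv_succ', hder]
    have h1 := IH (deriv f) g hf' hg
    have h2 := IH f (deriv g) hf hg'
    rw [itAdd (hf'.mul hg) (hf.mul hg') x, h1 x, h2 x]
    have e1 : ∀ k, iteratedDeriv k (deriv f) x = iteratedDeriv (k+1) f x := by
      intro k; rw [iteratedDeriv_succ']
    have e2 : ∀ k, iteratedDeriv k (deriv g) x = iteratedDeriv (k+1) g x := by
      intro k; rw [iteratedDeriv_succ']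
    -- abbreviations
    set A : ℕ → ℝ := fun i => iteratedDeriv i f x with hA
    set B : ℕ → ℝ := fun i => iteratedDeriv i g x with hB
    have lhs1 : ∑ k ∈ Finset.range (n + 1),
        (n.choose k : ℝ) * iteratedDeriv k (deriv f) x * iteratedDeriv (n - k) g x
        = ∑ k ∈ Finset.range (n + 1), (n.choose k : ℝ) * A (k+1) * B (n - k) := by
      refine Finset.sum_congr rfl fun k _ => by rw [e1 k]
    have lhs2 : ∑ k ∈ Finset.range (n + 1),
        (n.choose k : ℝ) * iteratedDeriv k f x * iteratedDeriv (n - k) (deriv g) x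
        = ∑ k ∈ Finset.range (n + 1), (n.choose k : ℝ) * A k * B (n + 1 - k) := by
      refine Finset.sum_congr rfl fun k hk => ?_
      rw [e2 (n - k)]
      have : n - k + 1 = n + 1 - k := by
        have := Finset.mem_range.mp hk; omega
      rw [this]
    rw [lhs1, lhs2]
    -- now pure binomial identity
    have goal : ∑ k ∈ Finset.range (n + 1), (n.choose k : ℝ) * A (k+1) * B (n - k)
        + ∑ k ∈ Finset.range (n + 1), (n.choose k : ℝ) * A k * B (n + 1 - k)
        = ∑ k ∈ Finset.range (n + 2), ((n+1).choose k : ℝ) * A k * B (n + 1 - k) := by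
      rw [Finset.sum_range_succ' (fun k => ((n+1).choose k : ℝ) * A k * B (n + 1 - k)) (n+1)]
      rw [Finset.sum_range_succ' (fun k => ((n).choose k : ℝ) * A k * B (n + 1 - k)) n]
      have pascal : ∀ k, ((n+1).choose (k+1) : ℝ) = (n.choose k : ℝ) + (n.choose (k+1) : ℝ) := by
        intro k; rw [Nat.choose_succ_succ]; push_cast; ring
      have split : ∑ k ∈ Finset.range (n + 1), ((n+1).choose (k+1) : ℝ) * A (k+1) * B (n + 1 - (k+1))
          = ∑ k ∈ Finset.range (n + 1), (n.choose k : ℝ) * A (k+1) * B (n - k)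
            + ∑ k ∈ Finset.range (n + 1), (n.choose (k+1) : ℝ) * A (k+1) * B (n - k) := by
        rw [← Finset.sum_add_distrib]
        refine Finset.sum_congr rfl fun k hk => ?_
        have : n + 1 - (k + 1) = n - k := by omega
        rw [this, pascal]; ring
      have tail : ∑ k ∈ Finset.range (n + 1), (n.choose (k+1) : ℝ) * A (k+1) * B (n - k)
          = ∑ k ∈ Finset.range n, (n.choose (k+1) : ℝ) * A (k+1) * B (n - k) := by
        rw [Finset.sum_range_succ]
        simp [Nat.choose_succ_self]
      have tail2 : ∑ k ∈ Finset.range n, (n.choose (k+1) : ℝ) * A (k+1) * B (n - k)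
          = ∑ k ∈ Finset.range n, (n.choose (k+1) : ℝ) * A (k+1) * B (n + 1 - (k+1)) := by
        refine Finset.sum_congr rfl fun k hk => ?_
        have : n + 1 - (k+1) = n - k := by omega
        rw [this]
      rw [split, tail, tail2]
      simp [Nat.choose_zero_right]
      ring
    linarith [goal]

private lemma itSum {ι : Type*} (s : Finset ι) (f : ι → ℝ → ℝ)
    (hf : ∀ j ∈ s, ContDiff ℝ ∞ (f j)) (n : ℕ) (x : ℝ) :
    iteratedDeriv n (fun t => ∑ j ∈ s, f j t) x = ∑ j ∈ s, iteratedDeriv n (f j) x := by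
  classical
  induction s using Finset.induction_on with
  | empty =>
    simp only [Finset.sum_empty]
    rw [iteratedDeriv_eq_iteratedFDeriv, iteratedFDeriv_zero_fun]
    rfl
  | insert b s2 hns ih =>
    have hb : ContDiff ℝ ∞ (f b) := hf b (Finset.mem_insert_self b s2)
    have hrest : ContDiff ℝ ∞ (fun t => ∑ j ∈ s2, f j t) :=
      ContDiff.sum fun j hj => hf j (Finset.mem_insert_of_mem hj)
    rw [Finset.sum_insert hns]
    have : (fun t => ∑ j ∈ insert b s2, f j t)
        = fun t => f b t + ∑ j ∈ s2, f j t := by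
      funext t; rw [Finset.sum_insert hns]
    rw [this, itAdd hb hrest, ih (fun j hj => hf j (Finset.mem_insert_of_mem hj))]

theorem stmt18 (g : ℕ) (hg : 2 ≤ g) (p : ℝ → ℝ)
    (htrig : ∃ (d : ℕ) (a : ℤ → ℂ), ∀ x : ℝ,
      (p x : ℂ) = ∑ j ∈ Finset.Icc (-(d : ℤ)) (d : ℤ), a j * Complex.exp (Complex.I * (j : ℂ) * x))
    (x : ℝ) (hx : x ∈ Set.Ico (0 : ℝ) (2 * π)) (Θ : ℕ)
    (hp0 : ∀ j < g, p (x + 2 * π * j / g) = 0)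
    (hzero : ∀ j < g, ∀ μ < Θ, iteratedDeriv μ p (x + 2 * π * j / g) = 0)
    (hmin : ∃ j < g, iteratedDeriv Θ p (x + 2 * π * j / g) ≠ 0) :
    (∀ μ < 2 * Θ,
      iteratedDeriv μ (fun t => ∑ j ∈ Finset.range g, p (t + 2 * π * j / g) ^ 2) x = 0) ∧
    iteratedDeriv (2 * Θ) (fun t => ∑ j ∈ Finset.range g, p (t + 2 * π * j / g) ^ 2) x ≠ 0 ∧
    ∀ s < g, ∀ μ < 2 * Θ,
      iteratedDeriv μ
        (fun t => ∑ j ∈ (Finset.range g).erase s, p (t + 2 * π * j / g) ^ 2) x = 0 := by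
  -- p is smooth
  obtain ⟨d, a, ha⟩ := htrig
  have hp : ContDiff ℝ ∞ p := by
    have hF : ContDiff ℝ ∞ (fun t : ℝ =>
        ∑ j ∈ Finset.Icc (-(d : ℤ)) (d : ℤ), a j * Complex.exp (Complex.I * (j : ℂ) * t)) := by
      refine ContDiff.sum fun j _ => ?_
      refine contDiff_const.mul ?_
      refine (Complex.contDiff_exp (𝕜 := ℝ)).comp ?_
      exact contDiff_const.mul Complex.ofRealCLM.contDiff
    have : p = fun t : ℝ => (∑ j ∈ Finset.Icc (-(d : ℤ)) (d : ℤ),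
        a j * Complex.exp (Complex.I * (j : ℂ) * (t : ℂ))).re := by
      funext t
      rw [← ha t, Complex.ofReal_re]
    rw [this]
    exact Complex.reCLM.contDiff.comp hF
  -- shifted functions
  set c : ℕ → ℝ := fun j => 2 * π * j / g with hc
  have hq : ∀ j : ℕ, ContDiff ℝ ∞ (fun t => p (t + c j)) :=
    fun j => hp.comp (contDiff_id.add contDiff_const)
  have hshift : ∀ (j n : ℕ), iteratedDeriv n (fun t => p (t + c j)) x
      = iteratedDeriv n p (x + c j) := by
    intro j n
    have := iteratedDeriv_comp_add_const n p (c j)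
    exact congrFun this x
  -- Leibniz for the square
  have hsq : ∀ (j n : ℕ), iteratedDeriv n (fun t => p (t + c j) ^ 2) x
      = ∑ k ∈ Finset.range (n + 1),
          (n.choose k : ℝ) * iteratedDeriv k p (x + c j) * iteratedDeriv (n - k) p (x + c j) := by
    intro j n
    have hrw : (fun t => p (t + c j) ^ 2) = fun t => p (t + c j) * p (t + c j) := by
      funext t; ring
    rw [hrw, leibniz n _ _ (hq j) (hq j) x]
    exact Finset.sum_congr rfl fun k _ => by rw [hshift, hshift]
  have hCS : ∀ j : ℕ, ContDiff ℝ ∞ (fun t => p (t + c j) ^ 2) := by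
    intro j
    have : (fun t => p (t + c j) ^ 2) = fun t => p (t + c j) * p (t + c j) := by
      funext t; ring
    rw [this]; exact (hq j).mul (hq j)
  -- vanishing of each square's derivatives below 2Θ, for j < g
  have hvan : ∀ j < g, ∀ μ < 2 * Θ, iteratedDeriv μ (fun t => p (t + c j) ^ 2) x = 0 := by
    intro j hj μ hμ
    rw [hsq j μ]
    refine Finset.sum_eq_zero fun k hk => ?_
    have hk' : k ≤ μ := by have := Finset.mem_range.mp hk; omega
    by_cases h : k < Θ
    · have hΘ0 : 0 < Θ := by omega
      rw [hzero j hj k h]; ring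
    · have : μ - k < Θ := by omega
      rw [hzero j hj (μ - k) this]; ring
  -- value at 2Θ
  have hval : ∀ j < g, iteratedDeriv (2 * Θ) (fun t => p (t + c j) ^ 2) x
      = ((2 * Θ).choose Θ : ℝ) * (iteratedDeriv Θ p (x + c j)) ^ 2 := by
    intro j hj
    rw [hsq j (2 * Θ)]
    rw [Finset.sum_eq_single Θ]
    · rw [show 2 * Θ - Θ = Θ from by omega]; ring
    · intro k hk hkΘ
      have hk' : k ≤ 2 * Θ := by have := Finset.mem_range.mp hk; omega
      by_cases h : k < Θ
      · rw [hzero j hj k h]; ring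
      · have : 2 * Θ - k < Θ := by omega
        rw [hzero j hj (2 * Θ - k) this]; ring
    · intro h; exact absurd (Finset.mem_range.mpr (by omega)) h
  refine ⟨?_, ?_, ?_⟩
  · intro μ hμ
    rw [itSum (Finset.range g) (fun j t => p (t + c j) ^ 2) (fun j _ => hCS j) μ x]
    exact Finset.sum_eq_zero fun j hj => hvan j (Finset.mem_range.mp hj) μ hμ
  · rw [itSum (Finset.range g) (fun j t => p (t + c j) ^ 2) (fun j _ => hCS j) (2 * Θ) x]
    have : ∑ j ∈ Finset.range g, iteratedDeriv (2 * Θ) (fun t => p (t + c j) ^ 2) x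
        = ∑ j ∈ Finset.range g, ((2 * Θ).choose Θ : ℝ) * (iteratedDeriv Θ p (x + c j)) ^ 2 := by
      exact Finset.sum_congr rfl fun j hj => hval j (Finset.mem_range.mp hj)
    rw [this]
    obtain ⟨j0, hj0, hne⟩ := hmin
    have hpos : 0 < ∑ j ∈ Finset.range g, ((2 * Θ).choose Θ : ℝ) * (iteratedDeriv Θ p (x + c j)) ^ 2 := by
      refine Finset.sum_pos' (fun j _ => ?_) ⟨j0, Finset.mem_range.mpr hj0, ?_⟩
      · positivity
      · have h1 : (0:ℝ) < ((2 * Θ).choose Θ : ℝ) := by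
          exact_mod_cast Nat.choose_pos (by omega)
        have h2 : (0:ℝ) < (iteratedDeriv Θ p (x + c j0)) ^ 2 := by positivity
        positivity
    exact ne_of_gt hpos
  · intro s hs μ hμ
    rw [itSum ((Finset.range g).erase s) (fun j t => p (t + c j) ^ 2) (fun j _ => hCS j) μ x]
    refine Finset.sum_eq_zero fun j hj => ?_
    exact hvan j (Finset.mem_range.mp (Finset.mem_of_mem_erase hj)) μ hμ
end
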